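/- Fix N ≥ 2, weights w₁,…,w_N > 0 with Σᵢ wᵢ = 1, and 0 < χ < 1. Let V : ℝ → ℝ be continuous and coercive (V(x) → +∞ as |x| → ∞), and assume the function x ↦ inf_{y∈ℝ} (w₁ V(y) + w_N V(x + y)) − log|x| is coercive on ℝ. Then for every E₀ ∈ ℝ there exists ℓ > 0 such that every strictly increasing configuration x₁ < ⋯ < x_N with discrete Keller–Segel energy Ẽ_N(x) ≤ E₀ satisfies |xᵢ| ≤ ℓ for all i ∈ {1,…,N}. -/

import Mathlib

open Real Finset Filter

/-- `rᵢ = min(Δxᵢ, Δxᵢ₊₁)` with the convention `Δx₁ = Δx_{N+1} = +∞`, for `N = n + 2`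
particles indexed from `0` to `n+1`. -/
noncomputable def rball (n : ℕ) (x : Fin (n + 2) → ℝ) (i : Fin (n + 2)) : ℝ :=
  if i.val = 0 then x 1 - x 0
  else if i.val = n + 1 then x i - x (i - 1)
  else min (x i - x (i - 1)) (x (i + 1) - x i)

/-- The one-dimensional discrete modified Keller–Segel energy with confinement `V` and
chemosensitivity `χ`:
`Ẽ_N(x) = Σᵢ wᵢ log(wᵢ/rᵢ) + Σᵢ wᵢ V(xᵢ) + χ Σᵢ Σ_{j≠i} wᵢwⱼ log|xᵢ − xⱼ|`. -/
noncomputable def kellerSegelEnergy (n : ℕ) (w : Fin (n + 2) → ℝ) (V : ℝ → ℝ) (χ : ℝ)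
    (x : Fin (n + 2) → ℝ) : ℝ :=
  ∑ i, w i * Real.log (w i / rball n x i) + ∑ i, w i * V (x i) +
    χ * ∑ i, ∑ j ∈ Finset.univ.erase i, w i * w j * Real.log |x i - x j|

private lemma rball_le {n : ℕ} {x : Fin (n+2) → ℝ} (hx : StrictMono x) (i j : Fin (n+2))
    (hij : j ≠ i) : rball n x i ≤ |x i - x j| := by
  have hmono := hx.monotone
  unfold rball
  rcases lt_or_gt_of_ne (fun h => hij h.symm) with hlt | hlt
  · -- i < j, so x i < x j, |x i - x j| = x j - x i
    have hxij : x i < x j := hx hlt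
    rw [abs_sub_comm, abs_of_pos (by linarith)]
    split_ifs with h0 h1
    · -- i = 0 : x 1 - x 0 ≤ x j - x i,  i = 0, j ≥ 1
      have hi0 : i = 0 := by ext; simpa using h0
      have h1j : (1 : Fin (n+2)) ≤ j := by
        rw [Fin.le_def, Fin.val_one]; rw [Fin.lt_def, h0] at hlt; omega
      have := hmono h1j
      subst hi0; linarith
    · -- i = n+1 : impossible since j > i
      exfalso; rw [Fin.lt_def] at hlt; omega
    · -- interior : min ≤ x(i+1) - x i ≤ x j - x i
      have hip : (i+1 : Fin (n+2)).val = i.val + 1 :=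
        Fin.val_add_one_of_lt (by rw [Fin.lt_def]; simp [Fin.last]; omega)
      have hj : i + 1 ≤ j := by rw [Fin.le_def, hip]; rw [Fin.lt_def] at hlt; omega
      have := hmono hj
      have : x (i+1) - x i ≤ x j - x i := by linarith
      exact le_trans (min_le_right _ _) this
  · -- j < i
    have hxij : x j < x i := hx hlt
    rw [abs_of_pos (by linarith)]
    have hji : j.val < i.val := hlt
    have hi0 : i.val ≠ 0 := by omega
    have him : (i - 1 : Fin (n+2)).val = i.val - 1 := by
      rw [Fin.coe_sub_one, if_neg (fun h => hi0 (by simp [h]))]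
    have hjm : j ≤ i - 1 := by rw [Fin.le_def, him]; omega
    have hmj := hmono hjm
    split_ifs with h0 h1
    · exact absurd h0 hi0
    · linarith
    · have : x i - x (i-1) ≤ x i - x j := by linarith
      exact le_trans (min_le_left _ _) this

private lemma rball_pos {n : ℕ} {x : Fin (n+2) → ℝ} (hx : StrictMono x) (i : Fin (n+2)) :
    0 < rball n x i := by
  unfold rball
  have h01 : x 0 < x 1 := hx (by rw [Fin.lt_def]; simp)
  split_ifs with h0 h1
  · linarith
  · have him : (i - 1 : Fin (n+2)).val = i.val - 1 := by
      rw [Fin.coe_sub_one, if_neg (fun h => h0 (by simp [h]))]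
    have : (i-1 : Fin (n+2)) < i := by rw [Fin.lt_def, him]; omega
    have := hx this; linarith
  · have him : (i - 1 : Fin (n+2)).val = i.val - 1 := by
      rw [Fin.coe_sub_one, if_neg (fun h => h0 (by simp [h]))]
    have hip : (i+1 : Fin (n+2)).val = i.val + 1 :=
      Fin.val_add_one_of_lt (by rw [Fin.lt_def]; simp [Fin.last]; omega)
    have h1 : (i-1 : Fin (n+2)) < i := by rw [Fin.lt_def, him]; omega
    have h2 : i < i + 1 := by rw [Fin.lt_def, hip]; omega
    have := hx h1; have := hx h2
    simp only [lt_min_iff]; constructor <;> linarith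

private lemma cocompact_bound (f : ℝ → ℝ) (hf : Tendsto f (cocompact ℝ) atTop) (K : ℝ) :
    ∃ R > 0, ∀ t : ℝ, R ≤ |t| → K ≤ f t := by
  have h := hf.eventually (eventually_ge_atTop K)
  rw [hasBasis_cocompact.eventually_iff] at h
  obtain ⟨s, hs, hmem⟩ := h
  obtain ⟨R, hR⟩ := hs.isBounded.subset_closedBall 0
  refine ⟨|R| + 1, by positivity, fun t ht => ?_⟩
  refine hmem fun hts => ?_
  have h2 := hR hts
  rw [Metric.mem_closedBall, Real.dist_eq, sub_zero] at h2
  have := le_abs_self R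
  linarith

/-- for `N ≥ 2`, positive weights summing to one, `0 < χ < 1`, `V`
continuous and coercive with `x ↦ inf_y (w₁V(y) + w_N V(x+y)) − log|x|` coercive, every
energy sublevel set is uniformly bounded: all particles satisfy `|xᵢ| ≤ ℓ`. -/
theorem kellerSegel_sublevel_bounded (n : ℕ) (w : Fin (n + 2) → ℝ)
    (hw : ∀ i, 0 < w i) (hw1 : ∑ i, w i = 1) (χ : ℝ) (hχ0 : 0 < χ) (hχ1 : χ < 1)
    (V : ℝ → ℝ) (hVcont : Continuous V)
    (hVcoer : Tendsto V (cocompact ℝ) atTop)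
    (hVW : Tendsto
      (fun t : ℝ => (⨅ y : ℝ, (w 0 * V y + w (Fin.last (n + 1)) * V (t + y))) -
        Real.log |t|) (cocompact ℝ) atTop)
    (E₀ : ℝ) :
    ∃ ℓ > 0, ∀ x : Fin (n + 2) → ℝ, StrictMono x →
      kellerSegelEnergy n w V χ x ≤ E₀ →
      ∀ i : Fin (n + 2), |x i| ≤ ℓ := by
  obtain ⟨y₀, hy₀⟩ := hVcont.exists_forall_le hVcoer
  set m := V y₀ with hm
  set la : Fin (n+2) := Fin.last (n+1) with hla
  have hla0 : (0 : Fin (n+2)) ≠ la := by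
    intro h
    have := congrArg Fin.val h
    simp [hla, Fin.last] at this
  have hwle : ∀ i, w i ≤ 1 := by
    intro i
    rw [← hw1]
    exact Finset.single_le_sum (fun j _ => (hw j).le) (mem_univ i)
  set C₁ := ∑ i, w i * Real.log (w i) with hC₁
  set C₂ := C₁ + (1 - w 0 - w la) * m with hC₂
  obtain ⟨R₁, hR₁pos, hR₁⟩ := cocompact_bound _ hVW (E₀ - C₂ + 1)
  set T := max R₁ 1 with hT
  have hT1 : (1:ℝ) ≤ T := le_max_right _ _
  have hlogT : 0 ≤ Real.log T := Real.log_nonneg hT1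
  set K₁ := E₀ - C₁ - (1 - w 0) * m + Real.log T with hK₁
  obtain ⟨R₂, hR₂pos, hR₂⟩ := cocompact_bound V hVcoer (K₁ / w 0 + 1)
  refine ⟨R₂ + T, by positivity, fun x hx hE i => ?_⟩
  have hrpos := rball_pos hx
  set D := x la - x 0 with hD
  have hDpos : 0 < D := sub_pos.mpr (hx (Fin.pos_iff_ne_zero.mpr (Ne.symm hla0)))
  have hrD : ∀ i, rball n x i ≤ D := by
    intro i
    by_cases h0 : i = 0
    · subst h0
      have := rball_le hx 0 la (Ne.symm hla0)
      rwa [abs_sub_comm, abs_of_pos hDpos] at this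
    · have h1 := rball_le hx i 0 (Ne.symm h0)
      have h2 : x 0 < x i := hx (Fin.pos_iff_ne_zero.mpr h0)
      have h3 : x i ≤ x la := hx.monotone (Fin.le_last i)
      rw [abs_of_pos (by linarith)] at h1
      linarith
  set L := max (Real.log D) 0 with hL
  have hL0 : 0 ≤ L := le_max_right _ _
  -- entropy identity
  have hEntropy : ∑ i, w i * Real.log (w i / rball n x i)
      = C₁ - ∑ i, w i * Real.log (rball n x i) := by
    rw [hC₁, ← Finset.sum_sub_distrib]
    refine Finset.sum_congr rfl fun i _ => ?_
    rw [Real.log_div (hw i).ne' (hrpos i).ne']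
    ring
  -- interaction lower bound, per i
  have hInter : ∀ i ∈ univ, (1 - w i) * (w i * Real.log (rball n x i)) ≤
      ∑ j ∈ univ.erase i, w i * w j * Real.log |x i - x j| := by
    intro i _
    have h1 : ∑ j ∈ univ.erase i, w i * w j * Real.log (rball n x i) ≤
        ∑ j ∈ univ.erase i, w i * w j * Real.log |x i - x j| := by
      refine Finset.sum_le_sum fun j hj => ?_
      have hj' : j ≠ i := Finset.ne_of_mem_erase hj
      have hlog := Real.log_le_log (hrpos i) (rball_le hx i j hj')
      have hwnn : 0 ≤ w i * w j := mul_nonneg (hw i).le (hw j).le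
      calc w i * w j * Real.log (rball n x i) = (w i * w j) * Real.log (rball n x i) := by ring
        _ ≤ (w i * w j) * Real.log |x i - x j| := mul_le_mul_of_nonneg_left hlog hwnn
        _ = w i * w j * Real.log |x i - x j| := by ring
    refine le_trans (le_of_eq ?_) h1
    calc (1 - w i) * (w i * Real.log (rball n x i))
        = (∑ j ∈ univ.erase i, w j) * (w i * Real.log (rball n x i)) := by
          rw [Finset.sum_erase_eq_sub (mem_univ i), hw1]
      _ = ∑ j ∈ univ.erase i, w j * (w i * Real.log (rball n x i)) := by
          rw [Finset.sum_mul]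
      _ = ∑ j ∈ univ.erase i, w i * w j * Real.log (rball n x i) := by
          refine Finset.sum_congr rfl fun j _ => by ring
  have hchain : χ * ∑ i, (1 - w i) * (w i * Real.log (rball n x i)) ≤
      χ * ∑ i, ∑ j ∈ univ.erase i, w i * w j * Real.log |x i - x j| :=
    mul_le_mul_of_nonneg_left (Finset.sum_le_sum hInter) hχ0.le
  -- combined log bound
  have hcsum : (∑ i, w i * Real.log (rball n x i)) -
      χ * ∑ i, (1 - w i) * (w i * Real.log (rball n x i)) ≤ L := by
    rw [Finset.mul_sum, ← Finset.sum_sub_distrib]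
    have h2 : ∀ i ∈ univ, w i * Real.log (rball n x i) -
        χ * ((1 - w i) * (w i * Real.log (rball n x i))) ≤ w i * (1 - χ * (1 - w i)) * L := by
      intro i _
      have hlog : Real.log (rball n x i) ≤ L :=
        le_trans (Real.log_le_log (hrpos i) (hrD i)) (le_max_left _ _)
      have hfac : 0 ≤ 1 - χ * (1 - w i) := by nlinarith [mul_pos hχ0 (hw i)]
      have hcpos : 0 ≤ w i * (1 - χ * (1 - w i)) := mul_nonneg (hw i).le hfac
      calc w i * Real.log (rball n x i) - χ * ((1 - w i) * (w i * Real.log (rball n x i)))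
          = (w i * (1 - χ * (1 - w i))) * Real.log (rball n x i) := by ring
        _ ≤ (w i * (1 - χ * (1 - w i))) * L := mul_le_mul_of_nonneg_left hlog hcpos
    refine le_trans (Finset.sum_le_sum h2) ?_
    rw [← Finset.sum_mul]
    have h3 : ∑ i, w i * (1 - χ * (1 - w i)) ≤ 1 := by
      have h3' : ∑ i, w i * (1 - χ * (1 - w i)) ≤ ∑ i, w i := by
        refine Finset.sum_le_sum fun i _ => ?_
        nlinarith [mul_nonneg (mul_nonneg hχ0.le (hw i).le)
          (show (0:ℝ) ≤ 1 - w i by linarith [hwle i])]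
      rwa [hw1] at h3'
    nlinarith [h3, hL0]
  -- main sublevel inequality
  have hS2 : ∑ i, w i * V (x i) ≤ E₀ - C₁ + L := by
    have hE' := hE
    unfold kellerSegelEnergy at hE'
    rw [hEntropy] at hE'
    linarith [hchain, hcsum]
  -- bound on diameter
  have hDT : D ≤ T := by
    rcases lt_or_ge D 1 with hD1 | hD1
    · linarith
    · by_contra hcon
      push_neg at hcon
      have hRD : R₁ ≤ |D| := by
        rw [abs_of_pos hDpos]
        exact le_trans (le_max_left _ _) hcon.le
      have h1 := hR₁ D hRD
      rw [abs_of_pos hDpos] at h1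
      have hbdd : BddBelow (Set.range fun y => w 0 * V y + w la * V (D + y)) := by
        refine ⟨(w 0 + w la) * m, ?_⟩
        rintro z ⟨y, rfl⟩
        dsimp only
        have h5 := mul_le_mul_of_nonneg_left (hy₀ y) (hw 0).le
        have h6 := mul_le_mul_of_nonneg_left (hy₀ (D + y)) (hw la).le
        linarith
      have hIle : (⨅ y, w 0 * V y + w la * V (D + y)) ≤ w 0 * V (x 0) + w la * V (x la) := by
        have h7 := ciInf_le hbdd (x 0)
        have h8 : D + x 0 = x la := by rw [hD]; ring
        rwa [h8] at h7
      have hsub : ({0, la} : Finset (Fin (n+2))) ⊆ univ := subset_univ _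
      have e1 : ∑ i ∈ ({0, la} : Finset (Fin (n+2))), w i * V (x i)
          = w 0 * V (x 0) + w la * V (x la) := Finset.sum_pair hla0
      have e2 : ∑ i ∈ ({0, la} : Finset (Fin (n+2))), w i = w 0 + w la := Finset.sum_pair hla0
      have e3 := Finset.sum_sdiff (f := fun i => w i * V (x i)) hsub
      have e4 := Finset.sum_sdiff (f := w) hsub
      have e5 : (1 - w 0 - w la) * m ≤ ∑ i ∈ univ \ {0, la}, w i * V (x i) := by
        have e6 : ∑ i ∈ univ \ ({0, la} : Finset (Fin (n+2))), w i * m ≤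
            ∑ i ∈ univ \ {0, la}, w i * V (x i) :=
          Finset.sum_le_sum fun i _ => mul_le_mul_of_nonneg_left (hy₀ (x i)) (hw i).le
        have e7 : ∑ i ∈ univ \ ({0, la} : Finset (Fin (n+2))), w i * m
            = (1 - w 0 - w la) * m := by
          rw [← Finset.sum_mul]
          have : ∑ i ∈ univ \ ({0, la} : Finset (Fin (n+2))), w i = 1 - w 0 - w la := by
            rw [e2] at e4
            rw [hw1] at e4
            linarith
          rw [this]
        linarith
      have hLD : L = Real.log D := max_eq_left (Real.log_nonneg hD1)
      rw [e1] at e3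
      linarith [hS2]
  have hLlogT : L ≤ Real.log T :=
    max_le (Real.log_le_log hDpos (le_trans hDT (le_refl _))) hlogT
  -- bound on x 0
  have hx0 : |x 0| < R₂ := by
    by_contra hcon
    push_neg at hcon
    have h1 := hR₂ (x 0) hcon
    have e1 : ∑ i ∈ univ.erase 0, w i * V (x i) + w 0 * V (x 0) = ∑ i, w i * V (x i) :=
      Finset.sum_erase_add _ _ (mem_univ 0)
    have e2 : ∑ i ∈ univ.erase (0 : Fin (n+2)), w i = 1 - w 0 := by
      rw [Finset.sum_erase_eq_sub (mem_univ 0), hw1]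
    have e3 : (1 - w 0) * m ≤ ∑ i ∈ univ.erase 0, w i * V (x i) := by
      calc (1 - w 0) * m = ∑ i ∈ univ.erase (0 : Fin (n+2)), w i * m := by
            rw [← Finset.sum_mul, e2]
        _ ≤ _ := Finset.sum_le_sum fun i _ => mul_le_mul_of_nonneg_left (hy₀ (x i)) (hw i).le
    have h4 : w 0 * V (x 0) ≤ K₁ := by rw [hK₁]; linarith [hS2, hLlogT]
    have h5 : w 0 * (K₁ / w 0 + 1) ≤ w 0 * V (x 0) :=
      mul_le_mul_of_nonneg_left h1 (hw 0).le
    have h6 : w 0 * (K₁ / w 0 + 1) = K₁ + w 0 := by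
      rw [mul_add, mul_one, mul_div_cancel₀ _ (hw 0).ne']
    linarith [hw 0]
  -- conclude
  have h6 : 0 ≤ x i - x 0 := sub_nonneg.mpr (hx.monotone (Fin.zero_le i))
  have h7 : x i - x 0 ≤ D := by
    rw [hD]
    have := hx.monotone (Fin.le_last i)
    linarith
  have h8 : |x i| ≤ |x 0| + |x i - x 0| := by
    calc |x i| = |x 0 + (x i - x 0)| := by congr 1; ring
      _ ≤ |x 0| + |x i - x 0| := abs_add_le _ _
  rw [abs_of_nonneg h6] at h8
  linarith
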